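/- If H is a {1,2}-graph on n vertices whose maximum complete {1,2}-subgraph has order t ≥ 2, then λ'(H) = 2 - 1/t, attained by putting weight 1/t on each vertex of a fixed maximum complete {1,2}-subgraph and 0 elsewhere. -/

import Mathlib

open Finset

def stdSimplex' (n : ℕ) : Set (Fin n → ℝ) :=
  {x | (∀ i, 0 ≤ x i) ∧ ∑ i, x i = 1}

lemma sq_sum_aux' {ι : Type*} [DecidableEq ι] (T : Finset ι) (x : ι → ℝ) :
    2 * ∑ e ∈ T.powersetCard 2, ∏ i ∈ e, x i = (∑ i ∈ T, x i)^2 - ∑ i ∈ T, (x i)^2 := by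
  induction T using Finset.induction_on with
  | empty =>
    rw [show ((∅ : Finset ι).powersetCard 2) = ∅ by simp]
    simp
  | insert a T ha ih =>
    rw [show (2:ℕ) = Nat.succ 1 from rfl, powersetCard_succ_insert ha,
      Finset.sum_union, Finset.sum_image, powersetCard_one, Finset.sum_map,
      Finset.sum_insert ha, Finset.sum_insert ha]
    · simp only [Function.Embedding.coeFn_mk]
      have h1 : ∀ b ∈ T, (∏ i ∈ insert a {b}, x i) = x a * x b := by
        intro b hb
        rw [Finset.prod_insert (by simp; rintro rfl; exact ha hb), Finset.prod_singleton]
      rw [Finset.sum_congr rfl fun b hb => h1 b hb, ← Finset.mul_sum]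
      have := ih
      ring_nf
      ring_nf at this
      nlinarith [this]
    · intro e1 h1 e2 h2 heq
      have h1' := (Finset.mem_powersetCard.1 h1).1
      have h2' := (Finset.mem_powersetCard.1 h2).1
      have h := congrArg (·.erase a) heq
      simpa [Finset.erase_insert_eq_erase,
        Finset.erase_eq_of_notMem (fun h => ha (h1' h)),
        Finset.erase_eq_of_notMem (fun h => ha (h2' h))] using h
    · rw [Finset.disjoint_left]
      intro e he hee
      have := (Finset.mem_powersetCard.1 he).1
      obtain ⟨p, hp, rfl⟩ := Finset.mem_image.1 hee
      exact ha (this (Finset.mem_insert_self a p))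

lemma upper_aux (n t : ℕ) (ht : 2 ≤ t) (E1 : Finset (Fin n)) (E2 : Finset (Finset (Fin n)))
    (hE2 : ∀ e ∈ E2, e.card = 2)
    (hmax : ∀ U : Finset (Fin n), U ⊆ E1 → U.powersetCard 2 ⊆ E2 → U.card ≤ t) :
    ∀ (m : ℕ) (x : Fin n → ℝ), (∀ i, 0 ≤ x i) → ∑ i, x i = 1 →
      (univ.filter (fun i => x i ≠ 0)).card ≤ m →
      (∑ i ∈ E1, x i) + 2 * ∑ e ∈ E2, ∏ i ∈ e, x i ≤ 2 - 1/(t:ℝ) := by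
  have ht' : (2:ℝ) ≤ (t:ℝ) := by exact_mod_cast ht
  have htpos : (0:ℝ) < t := by linarith
  intro m
  induction m with
  | zero =>
    intro x hx0 hx1 hcard
    exfalso
    have hemp : (univ.filter (fun i => x i ≠ 0)) = ∅ :=
      Finset.card_eq_zero.1 (Nat.le_zero.1 hcard)
    have hz : ∀ i ∈ (univ : Finset (Fin n)), x i = 0 := by
      intro i _
      by_contra h
      have : i ∈ univ.filter (fun i => x i ≠ 0) := by simp [h]
      simp [hemp] at this
    rw [Finset.sum_congr rfl hz] at hx1
    simp at hx1
  | succ m ih =>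
    intro x hx0 hx1 hcard
    set T := univ.filter (fun i => x i ≠ 0) with hT
    have hxT : ∀ i, i ∉ T → x i = 0 := by
      intro i hi
      by_contra h
      exact hi (by simp [hT, h])
    have hTmem : ∀ i, x i ≠ 0 → i ∈ T := fun i h => by simp [hT, h]
    by_cases hcomp : (T ∩ E1).powersetCard 2 ⊆ E2
    · -- direct bound
      have hcardU : (T ∩ E1).card ≤ t := hmax _ inter_subset_right hcomp
      set s := ∑ i ∈ T ∩ E1, x i with hs
      have hlin : ∑ i ∈ E1, x i = s := by
        refine (Finset.sum_subset inter_subset_right ?_).symm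
        intro i hi hni
        exact hxT i (fun h => hni (Finset.mem_inter.2 ⟨h, hi⟩))
      have hTsum : ∑ i ∈ T, x i = 1 := by
        rw [← hx1]
        exact Finset.sum_subset (subset_univ T) (fun i _ hi => hxT i hi)
      have hquad : ∑ e ∈ E2, ∏ i ∈ e, x i ≤ ∑ e ∈ T.powersetCard 2, ∏ i ∈ e, x i := by
        have h1 : ∑ e ∈ E2, ∏ i ∈ e, x i = ∑ e ∈ E2 ∩ T.powersetCard 2, ∏ i ∈ e, x i := by
          refine (Finset.sum_subset inter_subset_left ?_).symm
          intro e he hne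
          have hce := hE2 e he
          have hnsub : ¬ e ⊆ T := fun hsub =>
            hne (mem_inter.2 ⟨he, Finset.mem_powersetCard.2 ⟨hsub, hce⟩⟩)
          obtain ⟨i, hie, hit⟩ := Finset.not_subset.1 hnsub
          exact Finset.prod_eq_zero hie (hxT i hit)
        rw [h1]
        exact Finset.sum_le_sum_of_subset_of_nonneg inter_subset_right
          (fun e _ _ => Finset.prod_nonneg fun i _ => hx0 i)
      have hsq : 2 * ∑ e ∈ T.powersetCard 2, ∏ i ∈ e, x i = 1 - ∑ i ∈ T, (x i)^2 := by
        rw [sq_sum_aux', hTsum]; ring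
      have hCS : s^2 ≤ (t:ℝ) * ∑ i ∈ T, (x i)^2 := by
        calc s^2 ≤ ((T∩E1).card : ℝ) * ∑ i ∈ T∩E1, (x i)^2 := by
              exact sq_sum_le_card_mul_sum_sq
          _ ≤ (t:ℝ) * ∑ i ∈ T, (x i)^2 := by
              apply mul_le_mul (by exact_mod_cast hcardU)
                (Finset.sum_le_sum_of_subset_of_nonneg inter_subset_left
                  (fun i _ _ => sq_nonneg _))
                (Finset.sum_nonneg fun i _ => sq_nonneg _) (by positivity)
      have hs1 : s ≤ 1 := by
        rw [← hTsum]
        exact Finset.sum_le_sum_of_subset_of_nonneg inter_subset_left (fun i _ _ => hx0 i)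
      have hs0 : 0 ≤ s := Finset.sum_nonneg fun i _ => hx0 i
      have h1t : (t:ℝ) * (1/(t:ℝ)) = 1 := mul_one_div_cancel (ne_of_gt htpos)
      have hfac : 0 ≤ (1 - s) * ((t:ℝ) - 1 - s) :=
        mul_nonneg (by linarith) (by linarith)
      nlinarith [hquad, hsq, hCS, hlin, hfac, h1t, htpos]
    · -- shifting
      obtain ⟨p, hp, hpE2⟩ := Finset.not_subset.1 hcomp
      obtain ⟨hpsub, hpcard⟩ := Finset.mem_powersetCard.1 hp
      obtain ⟨a, b, hab, rfl⟩ := Finset.card_eq_two.1 hpcard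
      have haT := hpsub (Finset.mem_insert_self a {b})
      have hbT := hpsub (Finset.mem_insert_of_mem (Finset.mem_singleton_self b))
      have key : ∀ i j : Fin n, i ∈ T → j ∈ T → i ∈ E1 → j ∈ E1 → i ≠ j →
          ({i, j} : Finset (Fin n)) ∉ E2 →
          (∑ e ∈ E2, if j ∈ e then ∏ l ∈ e.erase j, x l else 0) ≤
          (∑ e ∈ E2, if i ∈ e then ∏ l ∈ e.erase i, x l else 0) →
          (∑ i ∈ E1, x i) + 2 * ∑ e ∈ E2, ∏ i ∈ e, x i ≤ 2 - 1/(t:ℝ) := by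
        intro i j hiT hjT hiE1 hjE1 hij hijE2 hA
        set x' : Fin n → ℝ := fun k => if k = j then 0 else if k = i then x i + x j else x k
          with hx'
        have hx'j : x' j = 0 := by simp [hx']
        have hx'i : x' i = x i + x j := by simp [hx', hij]
        have hx'k : ∀ k, k ≠ i → k ≠ j → x' k = x k := by
          intro k h1 h2; simp [hx', h1, h2]
        have hx'0 : ∀ k, 0 ≤ x' k := by
          intro k
          rcases eq_or_ne k j with rfl | h2
          · rw [hx'j]
          rcases eq_or_ne k i with rfl | h1
          · rw [hx'i]; exact add_nonneg (hx0 _) (hx0 _)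
          · rw [hx'k k h1 h2]; exact hx0 k
        have hsum' : ∀ S : Finset (Fin n), i ∈ S → j ∈ S →
            ∑ k ∈ S, x' k = ∑ k ∈ S, x k := by
          intro S hiS hjS
          have hiS' : i ∈ S.erase j := Finset.mem_erase.2 ⟨hij, hiS⟩
          rw [← Finset.add_sum_erase S x' hjS, ← Finset.add_sum_erase S x hjS,
            ← Finset.add_sum_erase _ x' hiS', ← Finset.add_sum_erase _ x hiS']
          have hc : ∀ k ∈ (S.erase j).erase i, x' k = x k := by
            intro k hk
            exact hx'k k (Finset.mem_erase.1 hk).1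
              (Finset.mem_erase.1 (Finset.mem_of_mem_erase hk)).1
          rw [Finset.sum_congr rfl hc, hx'j, hx'i]
          ring
        have hsupp : univ.filter (fun k => x' k ≠ 0) ⊆ T.erase j := by
          intro k hk
          simp only [Finset.mem_filter] at hk
          have hkj : k ≠ j := by rintro rfl; exact hk.2 hx'j
          refine Finset.mem_erase.2 ⟨hkj, ?_⟩
          rcases eq_or_ne k i with rfl | hki
          · exact hiT
          · exact hTmem k (by rw [← hx'k k hki hkj]; exact hk.2)
        have hcard' : (univ.filter (fun k => x' k ≠ 0)).card ≤ m := by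
          calc (univ.filter (fun k => x' k ≠ 0)).card ≤ (T.erase j).card :=
                Finset.card_le_card hsupp
            _ = T.card - 1 := Finset.card_erase_of_mem hjT
            _ ≤ (m + 1) - 1 := Nat.sub_le_sub_right hcard 1
            _ = m := rfl
        have hx'1 : ∑ k, x' k = 1 := by
          rw [hsum' univ (mem_univ i) (mem_univ j)]; exact hx1
        have hIH := ih x' hx'0 hx'1 hcard'
        -- show f x ≤ f x'
        have hlin : ∑ k ∈ E1, x' k = ∑ k ∈ E1, x k := hsum' E1 hiE1 hjE1
        have hedge : ∀ e ∈ E2, ∏ l ∈ e, x' l = (∏ l ∈ e, x l) +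
            x j * ((if i ∈ e then ∏ l ∈ e.erase i, x l else 0) -
                   (if j ∈ e then ∏ l ∈ e.erase j, x l else 0)) := by
          intro e he
          have hce := hE2 e he
          have hnb : ¬ (i ∈ e ∧ j ∈ e) := by
            rintro ⟨hie, hje⟩
            refine hijE2 ?_
            have hsub : ({i,j} : Finset (Fin n)) ⊆ e := by
              intro k hk
              simp only [Finset.mem_insert, Finset.mem_singleton] at hk
              rcases hk with rfl | rfl <;> assumption
            have : ({i,j} : Finset (Fin n)) = e := by
              apply Finset.eq_of_subset_of_card_le hsub
              rw [hce, Finset.card_insert_of_notMem (by simp [hij]), Finset.card_singleton]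
            rwa [this]
          by_cases hie : i ∈ e
          · have hje : j ∉ e := fun h => hnb ⟨hie, h⟩
            have hc : ∀ l ∈ e.erase i, x' l = x l := by
              intro l hl
              exact hx'k l (Finset.mem_erase.1 hl).1
                (fun h => hje (h ▸ Finset.mem_of_mem_erase hl))
            rw [← Finset.mul_prod_erase e x' hie, ← Finset.mul_prod_erase e x hie,
              Finset.prod_congr rfl hc, hx'i, if_pos hie, if_neg hje]
            ring
          · by_cases hje : j ∈ e
            · have hc : ∀ l ∈ e.erase j, x' l = x l := by
                intro l hl
                exact hx'k l (fun h => hie (h ▸ Finset.mem_of_mem_erase hl))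
                  (Finset.mem_erase.1 hl).1
              rw [← Finset.mul_prod_erase e x' hje, ← Finset.mul_prod_erase e x hje,
                Finset.prod_congr rfl hc, hx'j, if_neg hie, if_pos hje]
              ring
            · have hc : ∀ l ∈ e, x' l = x l := by
                intro l hl
                exact hx'k l (fun h => hie (h ▸ hl)) (fun h => hje (h ▸ hl))
              rw [Finset.prod_congr rfl hc, if_neg hie, if_neg hje]
              ring
        have hq : ∑ e ∈ E2, ∏ l ∈ e, x' l = (∑ e ∈ E2, ∏ l ∈ e, x l) +
            x j * ((∑ e ∈ E2, if i ∈ e then ∏ l ∈ e.erase i, x l else 0) -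
                   (∑ e ∈ E2, if j ∈ e then ∏ l ∈ e.erase j, x l else 0)) := by
          rw [Finset.sum_congr rfl hedge, Finset.sum_add_distrib, ← Finset.mul_sum,
            Finset.sum_sub_distrib]
        have hmono : (∑ k ∈ E1, x k) + 2 * ∑ e ∈ E2, ∏ l ∈ e, x l ≤
            (∑ k ∈ E1, x' k) + 2 * ∑ e ∈ E2, ∏ l ∈ e, x' l := by
          rw [hlin, hq]
          nlinarith [mul_nonneg (hx0 j) (sub_nonneg.2 hA)]
        linarith [hIH]
      have haT' := (Finset.mem_inter.1 haT)
      have hbT' := (Finset.mem_inter.1 hbT)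
      rcases le_total (∑ e ∈ E2, if b ∈ e then ∏ l ∈ e.erase b, x l else 0)
          (∑ e ∈ E2, if a ∈ e then ∏ l ∈ e.erase a, x l else 0) with h | h
      · exact key a b haT'.1 hbT'.1 haT'.2 hbT'.2 hab hpE2 h
      · exact key b a hbT'.1 haT'.1 hbT'.2 haT'.2 hab.symm
          (by rwa [Finset.pair_comm]) h

/-- If `H` is a `{1,2}`-graph whose maximum complete `{1,2}`-subgraph has order `t ≥ 2`,
then `λ'(H) = 2 - 1/t`, attained by uniform weights on a fixed maximum complete
`{1,2}`-subgraph `W`. -/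
theorem stmt_4 (n t : ℕ) (ht : 2 ≤ t)
    (E1 : Finset (Fin n)) (E2 : Finset (Finset (Fin n)))
    (hE2 : ∀ e ∈ E2, e.card = 2)
    (W : Finset (Fin n)) (hW : W.card = t) (hW1 : W ⊆ E1)
    (hW2 : W.powersetCard 2 ⊆ E2)
    (hmax : ∀ U : Finset (Fin n), U ⊆ E1 → U.powersetCard 2 ⊆ E2 → U.card ≤ t) :
    IsGreatest {y : ℝ | ∃ x ∈ stdSimplex' n,
        y = (∑ i ∈ E1, x i) + 2 * ∑ e ∈ E2, ∏ i ∈ e, x i} (2 - 1 / (t : ℝ)) ∧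
    ((∑ i ∈ E1, (fun i => if i ∈ W then (1 : ℝ) / t else 0) i)
        + 2 * ∑ e ∈ E2, ∏ i ∈ e, (fun i => if i ∈ W then (1 : ℝ) / t else 0) i)
      = 2 - 1 / (t : ℝ) := by
  have ht' : (2:ℝ) ≤ (t:ℝ) := by exact_mod_cast ht
  have htne : (t:ℝ) ≠ 0 := by positivity
  -- the value at the uniform weighting
  have hlin : (∑ i ∈ E1, (fun i => if i ∈ W then (1 : ℝ) / t else 0) i) = 1 := by
    simp only
    rw [Finset.sum_ite_mem, Finset.inter_eq_right.2 hW1, Finset.sum_const, hW]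
    rw [nsmul_eq_mul]
    field_simp
  have hedge : ∀ e ∈ E2, (∏ i ∈ e, (fun i => if i ∈ W then (1 : ℝ) / t else 0) i)
      = if e ⊆ W then (1/(t:ℝ))^2 else 0 := by
    intro e he
    by_cases hsub : e ⊆ W
    · rw [if_pos hsub, Finset.prod_congr rfl (fun i hi => if_pos (hsub hi)),
        Finset.prod_const, hE2 e he]
    · obtain ⟨i, hie, hiW⟩ := Finset.not_subset.1 hsub
      rw [if_neg hsub]
      exact Finset.prod_eq_zero hie (by simp [hiW])
  have hfil : E2.filter (fun e => e ⊆ W) = W.powersetCard 2 := by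
    ext e
    simp only [Finset.mem_filter, Finset.mem_powersetCard]
    constructor
    · rintro ⟨he, hsub⟩; exact ⟨hsub, hE2 e he⟩
    · rintro ⟨hsub, hc⟩
      exact ⟨hW2 (Finset.mem_powersetCard.2 ⟨hsub, hc⟩), hsub⟩
  have hquad : (∑ e ∈ E2, ∏ i ∈ e, (fun i => if i ∈ W then (1 : ℝ) / t else 0) i)
      = (t.choose 2 : ℝ) * (1/(t:ℝ))^2 := by
    rw [Finset.sum_congr rfl hedge, Finset.sum_ite, Finset.sum_const_zero, add_zero,
      Finset.sum_const, hfil, Finset.card_powersetCard, hW, nsmul_eq_mul]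
  have hval : ((∑ i ∈ E1, (fun i => if i ∈ W then (1 : ℝ) / t else 0) i)
        + 2 * ∑ e ∈ E2, ∏ i ∈ e, (fun i => if i ∈ W then (1 : ℝ) / t else 0) i)
      = 2 - 1 / (t : ℝ) := by
    rw [hlin, hquad, Nat.cast_choose_two]
    field_simp
    ring
  refine ⟨⟨?_, ?_⟩, hval⟩
  · refine ⟨fun i => if i ∈ W then (1 : ℝ) / t else 0, ⟨?_, ?_⟩, hval.symm⟩
    · intro i
      by_cases h : i ∈ W <;> simp [h] <;> positivity
    · rw [Finset.sum_ite_mem, Finset.univ_inter, Finset.sum_const, hW]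
      rw [nsmul_eq_mul]
      field_simp
  · rintro y ⟨x, ⟨hx0, hx1⟩, rfl⟩
    exact upper_aux n t ht E1 E2 hE2 hmax
      ((univ.filter (fun i => x i ≠ 0)).card) x hx0 hx1 le_rfl
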